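/- Let γ > 1 and consider the smooth curve ρ₀ ↦ (p₁(ρ₀), u₁(ρ₀), ρ₁(ρ₀)) defined implicitly by the system: a₀ρ₀u_m = a₁ρ₁u₁, u_m²/2 + (γ/(γ−1))p_m/ρ₀ = u₁²/2 + (γ/(γ−1))p₁/ρ₁, and p_m/ρ₀^γ = p₁/ρ₁^γ (with fixed a₀, a₁, u_m, p_m > 0). Then along this curve, dp₁/dρ₀ = γ²p_m p₁(ρ₀^{γ−1} − ρ₁^{γ−1}) / ((γ−1)ρ₀^{γ+1}(u₁² − c₁²)), where c₁² = γp₁/ρ₁, at every point where u₁² ≠ c₁². -/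

import Mathlib

/-- Identity (3.9): along the family of stationary waves parametrized by the
left density `ρ₀` on a contact discontinuity,
`dp₁/dρ₀ = γ² p_m p₁ (ρ₀^{γ-1} - ρ₁^{γ-1}) / ((γ-1) ρ₀^{γ+1} (u₁² - c₁²))`. -/
theorem stmt_16 (γ a₀ a₁ um pm : ℝ) (hγ : 1 < γ)
    (ha₀ : 0 < a₀) (ha₁ : 0 < a₁) (hum : 0 < um) (hpm : 0 < pm)
    (P U R : ℝ → ℝ) (s₀ : ℝ) (hs₀ : 0 < s₀)
    (hpos : ∀ s : ℝ, 0 < s → 0 < P s ∧ 0 < U s ∧ 0 < R s)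
    (hmass : ∀ s : ℝ, 0 < s → a₀ * s * um = a₁ * R s * U s)
    (hbern : ∀ s : ℝ, 0 < s →
        um ^ 2 / 2 + (γ / (γ - 1)) * pm / s
          = (U s) ^ 2 / 2 + (γ / (γ - 1)) * P s / R s)
    (hent : ∀ s : ℝ, 0 < s → pm / s ^ γ = P s / (R s) ^ γ)
    (p' u' r' : ℝ)
    (hP : HasDerivAt P p' s₀) (hU : HasDerivAt U u' s₀) (hR : HasDerivAt R r' s₀)
    (hnonsonic : (U s₀) ^ 2 ≠ γ * P s₀ / R s₀) :
    p' = γ ^ 2 * pm * P s₀ * (s₀ ^ (γ - 1) - (R s₀) ^ (γ - 1))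
        / ((γ - 1) * s₀ ^ (γ + 1) * ((U s₀) ^ 2 - γ * P s₀ / R s₀)) := by
  obtain ⟨hp0, hu0, hr0⟩ := hpos s₀ hs₀
  have hγ1 : (0:ℝ) < γ - 1 := by linarith
  have hev : ∀ᶠ s in nhds s₀, 0 < s := eventually_gt_nhds hs₀
  -- product form of the entropy relation
  have hentP : ∀ s : ℝ, 0 < s → pm * (R s) ^ γ = P s * s ^ γ := by
    intro s hs
    have hsγ : (0:ℝ) < s ^ γ := Real.rpow_pos_of_pos hs γ
    have hrγ : (0:ℝ) < (R s) ^ γ := Real.rpow_pos_of_pos (hpos s hs).2.2 γ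
    exact (div_eq_div_iff hsγ.ne' hrγ.ne').mp (hent s hs)
  -- derivative of the mass relation
  have hd1L : HasDerivAt (fun s : ℝ => a₀ * s * um) (a₀ * 1 * um) s₀ :=
    ((hasDerivAt_id s₀).const_mul a₀).mul_const um
  have hd1R : HasDerivAt (fun s : ℝ => a₁ * R s * U s)
      (a₁ * r' * U s₀ + a₁ * R s₀ * u') s₀ := (hR.const_mul a₁).mul hU
  have h1 : a₀ * 1 * um = a₁ * r' * U s₀ + a₁ * R s₀ * u' :=
    hd1L.unique (hd1R.congr_of_eventuallyEq (hev.mono fun s hs => hmass s hs))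
  -- derivative of the Bernoulli relation
  have hd2L : HasDerivAt (fun s : ℝ => um ^ 2 / 2 + γ / (γ - 1) * pm / s)
      ((0 * s₀ - γ / (γ - 1) * pm * 1) / s₀ ^ 2) s₀ :=
    ((hasDerivAt_const s₀ (γ / (γ - 1) * pm)).div (hasDerivAt_id s₀) hs₀.ne').const_add
      (um ^ 2 / 2)
  have hd2R : HasDerivAt (fun s : ℝ => (U s) ^ 2 / 2 + γ / (γ - 1) * P s / R s)
      (((2:ℕ) * U s₀ ^ (2 - 1) * u') / 2
        + ((γ / (γ - 1) * p') * R s₀ - (γ / (γ - 1) * P s₀) * r') / R s₀ ^ 2) s₀ :=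
    ((hU.pow 2).div_const 2).add ((hP.const_mul (γ / (γ - 1))).div hR hr0.ne')
  have h2 : (0 * s₀ - γ / (γ - 1) * pm * 1) / s₀ ^ 2
      = ((2:ℕ) * U s₀ ^ (2 - 1) * u') / 2
        + ((γ / (γ - 1) * p') * R s₀ - (γ / (γ - 1) * P s₀) * r') / R s₀ ^ 2 :=
    hd2L.unique (hd2R.congr_of_eventuallyEq (hev.mono fun s hs => hbern s hs))
  -- derivative of the entropy relation
  have hd3L : HasDerivAt (fun s : ℝ => pm * (R s) ^ γ)
      (pm * (r' * γ * R s₀ ^ (γ - 1))) s₀ :=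
    (hR.rpow_const (Or.inl hr0.ne')).const_mul pm
  have hd3R : HasDerivAt (fun s : ℝ => P s * s ^ γ)
      (p' * s₀ ^ γ + P s₀ * (γ * s₀ ^ (γ - 1))) s₀ :=
    hP.mul (Real.hasDerivAt_rpow_const (Or.inl hs₀.ne'))
  have h3 : pm * (r' * γ * R s₀ ^ (γ - 1)) = p' * s₀ ^ γ + P s₀ * (γ * s₀ ^ (γ - 1)) :=
    hd3L.unique (hd3R.congr_of_eventuallyEq (hev.mono fun s hs => hentP s hs))
  -- power identities
  have hA : s₀ ^ (γ - 1) * s₀ = s₀ ^ γ := by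
    rw [← Real.rpow_add_one hs₀.ne' (γ - 1)]; norm_num
  have hB : (R s₀) ^ (γ - 1) * R s₀ = (R s₀) ^ γ := by
    rw [← Real.rpow_add_one hr0.ne' (γ - 1)]; norm_num
  have hXp : s₀ ^ γ * s₀ = s₀ ^ (γ + 1) := (Real.rpow_add_one hs₀.ne' γ).symm
  have hE : pm * (R s₀) ^ γ = P s₀ * s₀ ^ γ := hentP s₀ hs₀
  have hXpos : (0:ℝ) < s₀ ^ γ := Real.rpow_pos_of_pos hs₀ γ
  -- eliminate a₁ from the mass derivative
  have hA1 : R s₀ * U s₀ = s₀ * r' * U s₀ + s₀ * R s₀ * u' := by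
    have h0 := hmass s₀ hs₀
    have : a₁ * (R s₀ * U s₀) = a₁ * (s₀ * r' * U s₀ + s₀ * R s₀ * u') := by
      linear_combination s₀ * h1 - h0
    exact mul_left_cancel₀ ha₁.ne' this
  -- clean form of the entropy derivative
  have hB1 : γ * P s₀ * s₀ * r' = p' * s₀ * R s₀ + γ * P s₀ * R s₀ := by
    have hx : (γ * P s₀ * s₀ * r') * s₀ ^ γ
        = (p' * s₀ * R s₀ + γ * P s₀ * R s₀) * s₀ ^ γ := by
      linear_combination (s₀ * R s₀) * h3 + (-(γ * s₀ * pm * r')) * hB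
        + (γ * P s₀ * R s₀) * hA + (-(γ * s₀ * r')) * hE
    exact mul_right_cancel₀ hXpos.ne' hx
  -- clean form of the Bernoulli derivative
  have hH2 : -(γ * pm * (R s₀) ^ 2)
      = (γ - 1) * s₀ ^ 2 * (R s₀) ^ 2 * U s₀ * u'
        + γ * s₀ ^ 2 * (p' * R s₀ - P s₀ * r') := by
    field_simp at h2
    have h2' : (2 * (γ - 1)) * (-(γ * pm * (R s₀) ^ 2))
        = (2 * (γ - 1)) * ((γ - 1) * s₀ ^ 2 * (R s₀) ^ 2 * U s₀ * u'
            + γ * s₀ ^ 2 * (p' * R s₀ - P s₀ * r')) := by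
      linear_combination (γ - 1) * h2
    exact mul_left_cancel₀ (by positivity) h2'
  -- the key intermediate identity
  have hstar : p' * ((γ - 1) * s₀ ^ 2 * R s₀ * (R s₀ * (U s₀) ^ 2 - γ * P s₀))
      = γ ^ 2 * P s₀ * R s₀ * (pm * R s₀ - P s₀ * s₀) := by
    linear_combination (-(γ * P s₀ * (γ - 1) * s₀ * R s₀ * U s₀)) * hA1
      + (-(s₀ * ((γ - 1) * R s₀ * (U s₀) ^ 2 + γ * P s₀))) * hB1
      + (γ * P s₀) * hH2
  -- assemble the final result
  have hD : (γ - 1) * s₀ ^ (γ + 1) * ((U s₀) ^ 2 - γ * P s₀ / R s₀) ≠ 0 := by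
    have h3 : (0:ℝ) < s₀ ^ (γ + 1) := Real.rpow_pos_of_pos hs₀ _
    exact mul_ne_zero (mul_ne_zero hγ1.ne' h3.ne') (sub_ne_zero.mpr hnonsonic)
  rw [eq_div_iff hD, ← hXp]
  have hq : γ * P s₀ / R s₀ * R s₀ = γ * P s₀ := div_mul_cancel₀ _ hr0.ne'
  have hscaled :
      (p' * ((γ - 1) * (s₀ ^ γ * s₀) * ((U s₀) ^ 2 - γ * P s₀ / R s₀))) * (s₀ * (R s₀) ^ 2)
      = (γ ^ 2 * pm * P s₀ * (s₀ ^ (γ - 1) - (R s₀) ^ (γ - 1))) * (s₀ * (R s₀) ^ 2) := by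
    linear_combination (s₀ ^ γ) * hstar
      + (-(p' * (γ - 1) * s₀ ^ γ * s₀ ^ 2 * R s₀)) * hq
      + (-(γ ^ 2 * pm * P s₀ * (R s₀) ^ 2)) * hA
      + (γ ^ 2 * pm * P s₀ * s₀ * R s₀) * hB
      + (γ ^ 2 * P s₀ * s₀ * R s₀) * hE
  have hsr : s₀ * (R s₀) ^ 2 ≠ 0 := by positivity
  exact mul_right_cancel₀ hsr hscaled
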